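/- Let G be a group and x, y : ℝ → G be group homomorphisms from the additive group of reals, such that for all a, b ∈ ℝ the commutator relation x(a)y(b)x(a)⁻¹y(b)⁻¹ = z(γ·a·b) holds, where γ ∈ ℝ and z : ℝ → G is a homomorphism whose image commutes with the images of x and y. Then for all a, b, c ∈ ℝ with a + c ≠ 0: x(a)·y(b)·x(c) = y(bc/(a+c))·x(a+c)·y(ab/(a+c)). -/

import Mathlib

theorem stmt_1 {G : Type*} [Group G] (x y z : ℝ → G) (γ : ℝ)
    (hx : ∀ a b : ℝ, x (a + b) = x a * x b)
    (hy : ∀ a b : ℝ, y (a + b) = y a * y b)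
    (hz : ∀ a b : ℝ, z (a + b) = z a * z b)
    (hcomm : ∀ a b : ℝ, x a * y b * (x a)⁻¹ * (y b)⁻¹ = z (γ * a * b))
    (hzx : ∀ a b : ℝ, z a * x b = x b * z a)
    (hzy : ∀ a b : ℝ, z a * y b = y b * z a) :
    ∀ a b c : ℝ, a + c ≠ 0 →
      x a * y b * x c =
        y (b * c / (a + c)) * x (a + c) * y (a * b / (a + c)) := by
  intro a b c hs
  have swap : ∀ u v : ℝ, x u * y v = z (γ * u * v) * (y v * x u) := by
    intro u v
    calc x u * y v = (x u * y v * (x u)⁻¹ * (y v)⁻¹) * (y v * x u) := by group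
    _ = z (γ * u * v) * (y v * x u) := by rw [hcomm]
  have harg : γ * (a + c) * (a * b / (a + c)) = γ * a * b := by
    field_simp
  have hsum : b * c / (a + c) + a * b / (a + c) = b := by
    field_simp; ring
  calc x a * y b * x c = z (γ * a * b) * (y b * x a) * x c := by rw [swap]
  _ = z (γ * a * b) * y b * x (a + c) := by rw [hx]; group
  _ = y (b * c / (a + c)) * x (a + c) * y (a * b / (a + c)) := by
      rw [show y b = y (b * c / (a + c) + a * b / (a + c)) by rw [hsum], hy]
      calc z (γ * a * b) * (y (b * c / (a + c)) * y (a * b / (a + c))) * x (a + c)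
          = y (b * c / (a + c)) * (z (γ * a * b) * (y (a * b / (a + c)) * x (a + c))) := by
            rw [← mul_assoc (z _), hzy]; group
      _ = y (b * c / (a + c)) * (x (a + c) * y (a * b / (a + c))) := by
            rw [← harg, ← swap]
      _ = _ := by group
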